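/- Let Ω = (0,1)×(0,1) with variables (s,r), let K_⊥ > 0, Q_⊥ ∈ ℝ, Δt > 0. Let T^⋆, T^{n+1} : [0,1]×[0,1] → ℝ be twice continuously differentiable and satisfy for all (s,r) ∈ Ω: (T^{n+1} − T^⋆)/Δt − K_⊥ ∂_{rr} T^{n+1} = 0, with Neumann boundary conditions ∂_r T^{n+1}(s,0) = −Q_⊥ and ∂_r T^{n+1}(s,1) = 0 for all s ∈ (0,1). Then (1/2)∫_Ω ((T^{n+1})² − (T^⋆)²) dr ds ≤ −Δt K_⊥ ∫_Ω (∂_r T^{n+1})² dr ds + Δt Q_⊥ K_⊥ ∫_0^1 T^{n+1}(s,0) ds. -/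

import Mathlib

open Set

open intervalIntegral MeasureTheory in
private lemma radial_inner_step (Kp Q Δt : ℝ) (hΔt : 0 < Δt)
    (f g : ℝ → ℝ) (hf : ContDiff ℝ 2 f) (hg : Continuous g)
    (hpde : ∀ r ∈ Ioo (0:ℝ) 1, (f r - g r) / Δt - Kp * deriv (deriv f) r = 0)
    (hb0 : deriv f 0 = -Q) (hb1 : deriv f 1 = 0) :
    (1/2) * (∫ r in (0:ℝ)..1, ((f r)^2 - (g r)^2))
      ≤ -(Δt * Kp) * (∫ r in (0:ℝ)..1, (deriv f r)^2) + Δt * Q * Kp * f 0 := by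
  have h2 : ContDiff ℝ (1+1) f := by norm_num; exact hf
  have hdf : ContDiff ℝ 1 (deriv f) := (contDiff_succ_iff_deriv.mp h2).2.2
  have hfd : Differentiable ℝ f := (contDiff_succ_iff_deriv.mp h2).1
  have hdfd : Differentiable ℝ (deriv f) := (contDiff_one_iff_deriv.mp hdf).1
  have hcf : Continuous f := hfd.continuous
  have hcdf : Continuous (deriv f) := hdfd.continuous
  have hcddf : Continuous (deriv (deriv f)) := (contDiff_one_iff_deriv.mp hdf).2
  -- integration by parts
  have hparts : ∫ r in (0:ℝ)..1,
      (deriv (deriv f) r * f r + deriv f r * deriv f r)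
      = deriv f 1 * f 1 - deriv f 0 * f 0 :=
    integral_deriv_mul_eq_sub (fun x _ => (hdfd x).hasDerivAt)
      (fun x _ => (hfd x).hasDerivAt)
      (hcddf.intervalIntegrable _ _) (hcdf.intervalIntegrable _ _)
  have hsplit : ∫ r in (0:ℝ)..1,
      (deriv (deriv f) r * f r + deriv f r * deriv f r)
      = (∫ r in (0:ℝ)..1, deriv (deriv f) r * f r)
        + ∫ r in (0:ℝ)..1, (deriv f r)^2 := by
    rw [integral_add (f := fun r => deriv (deriv f) r * f r) (g := fun r => deriv f r * deriv f r) ((hcddf.mul hcf).intervalIntegrable _ _)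
      ((hcdf.mul hcdf).intervalIntegrable _ _)]
    congr 1
    simp [pow_two]
  have hibp : (∫ r in (0:ℝ)..1, deriv (deriv f) r * f r)
      = Q * f 0 - ∫ r in (0:ℝ)..1, (deriv f r)^2 := by
    rw [hsplit, hb0, hb1] at hparts
    linarith
  -- pointwise inequality on Icc
  have key : ∀ r ∈ Icc (0:ℝ) 1,
      (f r)^2 - (g r)^2 ≤ 2 * Δt * Kp * (deriv (deriv f) r * f r) := by
    have hIoo : ∀ r ∈ Ioo (0:ℝ) 1,
        (f r)^2 - (g r)^2 ≤ 2 * Δt * Kp * (deriv (deriv f) r * f r) := by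
      intro r hr
      have h := hpde r hr
      have heq : f r - g r = Δt * (Kp * deriv (deriv f) r) := by
        field_simp at h; linarith
      have h3 : 2 * Δt * Kp * (deriv (deriv f) r * f r)
          = 2 * (f r - g r) * f r := by rw [heq]; ring
      rw [h3]; nlinarith [sq_nonneg (f r - g r)]
    have hclosed : IsClosed {r : ℝ |
        (f r)^2 - (g r)^2 ≤ 2 * Δt * Kp * (deriv (deriv f) r * f r)} :=
      isClosed_le (by fun_prop) (by fun_prop)
    intro r hr
    have : Icc (0:ℝ) 1 ⊆ {r : ℝ |
        (f r)^2 - (g r)^2 ≤ 2 * Δt * Kp * (deriv (deriv f) r * f r)} := by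
      rw [← closure_Ioo (by norm_num : (0:ℝ) ≠ 1)]
      exact hclosed.closure_subset_iff.mpr hIoo
    exact this hr
  have hmono : (∫ r in (0:ℝ)..1, ((f r)^2 - (g r)^2))
      ≤ ∫ r in (0:ℝ)..1, 2 * Δt * Kp * (deriv (deriv f) r * f r) := by
    apply integral_mono_on (by norm_num)
      (((hcf.pow 2).sub (hg.pow 2)).intervalIntegrable _ _)
      ((continuous_const.mul (hcddf.mul hcf)).intervalIntegrable _ _)
    exact key
  rw [intervalIntegral.integral_const_mul, hibp] at hmono
  nlinarith

/-- Energy estimate for the second (radial-direction, implicit linear heat)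
step of the directional splitting scheme for the 2D nonlinear heat equation
on `Ω = (0,1) × (0,1)`, with Neumann boundary conditions `∂ᵣT = −Q⊥` at
`r = 0` and `∂ᵣT = 0` at `r = 1`.  `Ts s r` and `Tn1 s r` denote
`T^⋆(s,r)` and `T^{n+1}(s,r)`. -/
theorem implicit_radial_step_energy_2D
    (Kp Q Δt : ℝ) (hKp : 0 < Kp) (hΔt : 0 < Δt)
    (Ts Tn1 : ℝ → ℝ → ℝ)
    (hTs : ContDiff ℝ 2 (Function.uncurry Ts))
    (hTn1 : ContDiff ℝ 2 (Function.uncurry Tn1))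
    (hpde : ∀ s ∈ Ioo (0:ℝ) 1, ∀ r ∈ Ioo (0:ℝ) 1,
      (Tn1 s r - Ts s r) / Δt
        - Kp * deriv (deriv (fun y => Tn1 s y)) r = 0)
    (hbc0 : ∀ s ∈ Ioo (0:ℝ) 1, deriv (fun y => Tn1 s y) 0 = -Q)
    (hbc1 : ∀ s ∈ Ioo (0:ℝ) 1, deriv (fun y => Tn1 s y) 1 = 0) :
    (1/2) * (∫ s in (0:ℝ)..1, ∫ r in (0:ℝ)..1, ((Tn1 s r)^2 - (Ts s r)^2))
    ≤ -(Δt * Kp) * (∫ s in (0:ℝ)..1, ∫ r in (0:ℝ)..1,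
          (deriv (fun y => Tn1 s y) r)^2)
      + Δt * Q * Kp * (∫ s in (0:ℝ)..1, Tn1 s 0) := by
  open intervalIntegral MeasureTheory in
  -- joint continuity of the radial derivative
  have hDjoint : Continuous fun p : ℝ × ℝ => deriv (fun y => Tn1 p.1 y) p.2 := by
    have hD : ∀ s r : ℝ, deriv (fun y => Tn1 s y) r
        = fderiv ℝ (Function.uncurry Tn1) (s, r) ((0:ℝ), (1:ℝ)) := by
      intro s r
      have h1 : HasFDerivAt (Function.uncurry Tn1)
          (fderiv ℝ (Function.uncurry Tn1) (s, r)) (s, r) :=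
        (hTn1.differentiable two_ne_zero (s, r)).hasFDerivAt
      have h2 : HasDerivAt (fun y : ℝ => ((s : ℝ), y)) ((0:ℝ), (1:ℝ)) r :=
        HasDerivAt.prodMk (hasDerivAt_const r s) (hasDerivAt_id r)
      exact (h1.comp_hasDerivAt r h2).deriv
    have heq : (fun p : ℝ × ℝ => deriv (fun y => Tn1 p.1 y) p.2)
        = fun p : ℝ × ℝ => fderiv ℝ (Function.uncurry Tn1) p ((0:ℝ), (1:ℝ)) := by
      funext p; exact hD p.1 p.2
    rw [heq]
    exact (hTn1.continuous_fderiv two_ne_zero).clm_apply continuous_const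
  have hcTn1 : Continuous (Function.uncurry Tn1) := hTn1.continuous
  have hcTs : Continuous (Function.uncurry Ts) := hTs.continuous
  -- the functions of s
  set A : ℝ → ℝ := fun s => ∫ r in (0:ℝ)..1, ((Tn1 s r)^2 - (Ts s r)^2) with hA
  set C : ℝ → ℝ := fun s => ∫ r in (0:ℝ)..1, (deriv (fun y => Tn1 s y) r)^2 with hC
  have hcA : Continuous A := by
    apply continuous_parametric_intervalIntegral_of_continuous'
      (μ := volume) (f := fun s r => (Tn1 s r)^2 - (Ts s r)^2)
    have : Function.uncurry (fun s r => (Tn1 s r)^2 - (Ts s r)^2)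
        = fun p : ℝ × ℝ => (Function.uncurry Tn1 p)^2 - (Function.uncurry Ts p)^2 := rfl
    rw [this]; fun_prop
  have hcC : Continuous C := by
    apply continuous_parametric_intervalIntegral_of_continuous'
      (μ := volume) (f := fun s r => (deriv (fun y => Tn1 s y) r)^2)
    have : Function.uncurry (fun s r => (deriv (fun y => Tn1 s y) r)^2)
        = fun p : ℝ × ℝ => (deriv (fun y => Tn1 p.1 y) p.2)^2 := rfl
    rw [this]
    exact hDjoint.pow 2
  have hcT0 : Continuous fun s => Tn1 s 0 := by
    have : (fun s => Tn1 s 0) = fun s => Function.uncurry Tn1 (s, 0) := rfl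
    rw [this]; fun_prop
  -- pointwise-in-s inequality on Ioo
  have hsIoo : ∀ s ∈ Ioo (0:ℝ) 1,
      (1/2) * A s ≤ -(Δt * Kp) * C s + Δt * Q * Kp * Tn1 s 0 := by
    intro s hs
    have hfC2 : ContDiff ℝ 2 (fun y => Tn1 s y) :=
      hTn1.comp (contDiff_const.prodMk contDiff_id)
    have hgC : Continuous (fun y => Ts s y) :=
      hcTs.comp (continuous_const.prodMk continuous_id)
    exact radial_inner_step Kp Q Δt hΔt _ _ hfC2 hgC (hpde s hs) (hbc0 s hs) (hbc1 s hs)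
  -- extend to Icc by continuity
  have hsIcc : ∀ s ∈ Icc (0:ℝ) 1,
      (1/2) * A s ≤ -(Δt * Kp) * C s + Δt * Q * Kp * Tn1 s 0 := by
    have hclosed : IsClosed {s : ℝ |
        (1/2) * A s ≤ -(Δt * Kp) * C s + Δt * Q * Kp * Tn1 s 0} :=
      isClosed_le (continuous_const.mul hcA)
        ((continuous_const.mul hcC).add (continuous_const.mul hcT0))
    intro s hs
    have hsub : Icc (0:ℝ) 1 ⊆ {s : ℝ |
        (1/2) * A s ≤ -(Δt * Kp) * C s + Δt * Q * Kp * Tn1 s 0} := by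
      rw [← closure_Ioo (by norm_num : (0:ℝ) ≠ 1)]
      exact hclosed.closure_subset_iff.mpr hsIoo
    exact hsub hs
  -- integrate over s
  have hmono : (∫ s in (0:ℝ)..1, (1/2) * A s)
      ≤ ∫ s in (0:ℝ)..1, (-(Δt * Kp) * C s + Δt * Q * Kp * Tn1 s 0) :=
    integral_mono_on (by norm_num)
      ((continuous_const.mul hcA).intervalIntegrable _ _)
      (((continuous_const.mul hcC).add
        (continuous_const.mul hcT0)).intervalIntegrable _ _)
      hsIcc
  rw [intervalIntegral.integral_const_mul] at hmono
  rw [integral_add (f := fun s => -(Δt * Kp) * C s) (g := fun s => Δt * Q * Kp * Tn1 s 0) ((continuous_const.mul hcC).intervalIntegrable _ _)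
      ((continuous_const.mul hcT0).intervalIntegrable _ _),
    intervalIntegral.integral_const_mul, intervalIntegral.integral_const_mul] at hmono
  exact hmono
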